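/- Let D' = {(x,t_2,t_3) ∈ ℝ³ : 3t_3 + 2x³ + 6xt_2 ≠ 0} and define on D' the rational functions q_1 = 3(t_2 + x²)/(3t_3 + 2x³ + 6xt_2) and q_2 = 3x/(3t_3 + 2x³ + 6xt_2). Then (q_1,q_2) is a simultaneous solution on D' of the second and third flows of the two-component cKdV hierarchy with α = 0: (i) ∂q_1/∂t_2 = ∂_x q_2 and ∂q_2/∂t_2 = 2q_2 ∂_x q_1 + 4q_1 ∂_x q_2 − 6q_1² ∂_x q_1 + (1/4)∂_x³ q_1; (ii) ∂q_1/∂t_3 = 3q_2 ∂_x q_1 + 3q_1 ∂_x q_2 − 6q_1² ∂_x q_1 + (1/4)∂_x³ q_1 and ∂q_2/∂t_3 = 6q_1 q_2 ∂_x q_1 − 18q_1³ ∂_x q_1 + 6q_1² ∂_x q_2 + (3/4)q_1 ∂_x³ q_1 + 3q_2 ∂_x q_2 + (1/4)∂_x³ q_2. -/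

import Mathlib

/-- `q₁ = 3(t₂ + x²)/(3t₃ + 2x³ + 6xt₂)`. -/
noncomputable def q1sol (x t2 t3 : ℝ) : ℝ :=
  3 * (t2 + x ^ 2) / (3 * t3 + 2 * x ^ 3 + 6 * x * t2)

/-- `q₂ = 3x/(3t₃ + 2x³ + 6xt₂)`. -/
noncomputable def q2sol (x t2 t3 : ℝ) : ℝ :=
  3 * x / (3 * t3 + 2 * x ^ 3 + 6 * x * t2)

lemma hasDerivAt_poly6 (c0 c1 c2 c3 c4 c5 c6 y : ℝ) :
    HasDerivAt (fun y : ℝ => c0 + c1*y + c2*y^2 + c3*y^3 + c4*y^4 + c5*y^5 + c6*y^6)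
      (c1 + 2*c2*y + 3*c3*y^2 + 4*c4*y^3 + 5*c5*y^4 + 6*c6*y^5) y := by
  have h1 := (hasDerivAt_const y c0).add ((hasDerivAt_id' (x := y)).const_mul c1)
  have h2 := h1.add ((hasDerivAt_pow 2 y).const_mul c2)
  have h3 := h2.add ((hasDerivAt_pow 3 y).const_mul c3)
  have h4 := h3.add ((hasDerivAt_pow 4 y).const_mul c4)
  have h5 := h4.add ((hasDerivAt_pow 5 y).const_mul c5)
  have h6 := h5.add ((hasDerivAt_pow 6 y).const_mul c6)
  refine h6.congr_deriv ?_
  push_cast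
  ring

lemma deriv_polydiv (c0 c1 c2 c3 c4 c5 c6 d0 d1 d2 d3 : ℝ) (k : ℕ) (y : ℝ)
    (h : d0 + d1*y + d2*y^2 + d3*y^3 + 0*y^4 + 0*y^5 + 0*y^6 ≠ 0) :
    deriv (fun y : ℝ => (c0 + c1*y + c2*y^2 + c3*y^3 + c4*y^4 + c5*y^5 + c6*y^6)
        / (d0 + d1*y + d2*y^2 + d3*y^3 + 0*y^4 + 0*y^5 + 0*y^6)^k) y
      = ((c1 + 2*c2*y + 3*c3*y^2 + 4*c4*y^3 + 5*c5*y^4 + 6*c6*y^5)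
            * (d0 + d1*y + d2*y^2 + d3*y^3 + 0*y^4 + 0*y^5 + 0*y^6)^k
          - (c0 + c1*y + c2*y^2 + c3*y^3 + c4*y^4 + c5*y^5 + c6*y^6)
            * ((k:ℝ) * (d0 + d1*y + d2*y^2 + d3*y^3 + 0*y^4 + 0*y^5 + 0*y^6)^(k-1)
                * (d1 + 2*d2*y + 3*d3*y^2 + 4*0*y^3 + 5*0*y^4 + 6*0*y^5)))
        / ((d0 + d1*y + d2*y^2 + d3*y^3 + 0*y^4 + 0*y^5 + 0*y^6)^k)^2 := by
  have hN := hasDerivAt_poly6 c0 c1 c2 c3 c4 c5 c6 y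
  have hD := (hasDerivAt_poly6 d0 d1 d2 d3 0 0 0 y).pow k
  exact (hN.div hD (pow_ne_zero k h)).deriv

section xderivs
variable (t2 t3 : ℝ)

lemma den_canon_ne {t2 t3 y : ℝ} (h : 3*t3 + 2*y^3 + 6*y*t2 ≠ 0) :
    3*t3 + (6*t2)*y + 0*y^2 + 2*y^3 + 0*y^4 + 0*y^5 + 0*y^6 ≠ 0 := by
  intro hc; apply h; linear_combination hc

lemma dq1x (y : ℝ) (h : 3*t3 + 2*y^3 + 6*y*t2 ≠ 0) :
    deriv (fun y => q1sol y t2 t3) y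
      = (-18*t2^2 + 18*y*t3 - 6*y^4) / (3*t3 + 2*y^3 + 6*y*t2)^2 := by
  have hfun : (fun y => q1sol y t2 t3)
      = (fun y : ℝ => (3*t2 + 0*y + 3*y^2 + 0*y^3 + 0*y^4 + 0*y^5 + 0*y^6)
          / (3*t3 + (6*t2)*y + 0*y^2 + 2*y^3 + 0*y^4 + 0*y^5 + 0*y^6)^1) := by
    funext z; simp only [q1sol]; ring
  rw [hfun, deriv_polydiv _ _ _ _ _ _ _ _ _ _ _ 1 y (den_canon_ne h)]
  have h0 := den_canon_ne h
  rw [div_eq_div_iff (pow_ne_zero _ (pow_ne_zero _ h0)) (pow_ne_zero _ h)]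
  push_cast
  ring

lemma d2q1x_aux (y : ℝ) (h : 3*t3 + 2*y^3 + 6*y*t2 ≠ 0) :
    deriv (fun y : ℝ => (-18*t2^2 + 18*y*t3 - 6*y^4) / (3*t3 + 2*y^3 + 6*y*t2)^2) y
      = (54*t3^2 + 216*t2^3 - 108*y*t2*t3 + 216*y^2*t2^2 - 252*y^3*t3 - 72*y^4*t2 + 24*y^6)
          / (3*t3 + 2*y^3 + 6*y*t2)^3 := by
  have hfun : (fun y : ℝ => (-18*t2^2 + 18*y*t3 - 6*y^4) / (3*t3 + 2*y^3 + 6*y*t2)^2)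
      = (fun y : ℝ => ((-18*t2^2) + (18*t3)*y + 0*y^2 + 0*y^3 + (-6)*y^4 + 0*y^5 + 0*y^6)
          / (3*t3 + (6*t2)*y + 0*y^2 + 2*y^3 + 0*y^4 + 0*y^5 + 0*y^6)^2) := by
    funext z; ring
  rw [hfun, deriv_polydiv _ _ _ _ _ _ _ _ _ _ _ 2 y (den_canon_ne h)]
  have h0 := den_canon_ne h
  rw [div_eq_div_iff (pow_ne_zero _ (pow_ne_zero _ h0)) (pow_ne_zero _ h)]
  push_cast
  ring

lemma d3q1x_aux (y : ℝ) (h : 3*t3 + 2*y^3 + 6*y*t2 ≠ 0) :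
    deriv (fun y : ℝ => (54*t3^2 + 216*t2^3 - 108*y*t2*t3 + 216*y^2*t2^2 - 252*y^3*t3
        - 72*y^4*t2 + 24*y^6) / (3*t3 + 2*y^3 + 6*y*t2)^3) y
      = (-1296*t2*t3^2 - 3888*t2^4 + 2592*y*t2^2*t3 - 3240*y^2*t3^2 - 5184*y^2*t2^3
          + 864*y^3*t2*t3 - 3456*y^4*t2^2 + 3456*y^5*t3 + 1152*y^6*t2 - 144*y^8)
          / (3*t3 + 2*y^3 + 6*y*t2)^4 := by
  have hfun : (fun y : ℝ => (54*t3^2 + 216*t2^3 - 108*y*t2*t3 + 216*y^2*t2^2 - 252*y^3*t3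
        - 72*y^4*t2 + 24*y^6) / (3*t3 + 2*y^3 + 6*y*t2)^3)
      = (fun y : ℝ => ((54*t3^2 + 216*t2^3) + (-108*t2*t3)*y + (216*t2^2)*y^2
            + (-252*t3)*y^3 + (-72*t2)*y^4 + 0*y^5 + 24*y^6)
          / (3*t3 + (6*t2)*y + 0*y^2 + 2*y^3 + 0*y^4 + 0*y^5 + 0*y^6)^3) := by
    funext z; ring
  rw [hfun, deriv_polydiv _ _ _ _ _ _ _ _ _ _ _ 3 y (den_canon_ne h)]
  have h0 := den_canon_ne h
  rw [div_eq_div_iff (pow_ne_zero _ (pow_ne_zero _ h0)) (pow_ne_zero _ h)]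
  push_cast
  ring

lemma dq2x (y : ℝ) (h : 3*t3 + 2*y^3 + 6*y*t2 ≠ 0) :
    deriv (fun y => q2sol y t2 t3) y
      = (9*t3 - 12*y^3) / (3*t3 + 2*y^3 + 6*y*t2)^2 := by
  have hfun : (fun y => q2sol y t2 t3)
      = (fun y : ℝ => (0 + 3*y + 0*y^2 + 0*y^3 + 0*y^4 + 0*y^5 + 0*y^6)
          / (3*t3 + (6*t2)*y + 0*y^2 + 2*y^3 + 0*y^4 + 0*y^5 + 0*y^6)^1) := by
    funext z; simp only [q2sol]; ring
  rw [hfun, deriv_polydiv _ _ _ _ _ _ _ _ _ _ _ 1 y (den_canon_ne h)]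
  have h0 := den_canon_ne h
  rw [div_eq_div_iff (pow_ne_zero _ (pow_ne_zero _ h0)) (pow_ne_zero _ h)]
  push_cast
  ring

lemma d2q2x_aux (y : ℝ) (h : 3*t3 + 2*y^3 + 6*y*t2 ≠ 0) :
    deriv (fun y : ℝ => (9*t3 - 12*y^3) / (3*t3 + 2*y^3 + 6*y*t2)^2) y
      = (-108*t2*t3 - 216*y^2*t3 - 72*y^3*t2 + 72*y^5) / (3*t3 + 2*y^3 + 6*y*t2)^3 := by
  have hfun : (fun y : ℝ => (9*t3 - 12*y^3) / (3*t3 + 2*y^3 + 6*y*t2)^2)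
      = (fun y : ℝ => ((9*t3) + 0*y + 0*y^2 + (-12)*y^3 + 0*y^4 + 0*y^5 + 0*y^6)
          / (3*t3 + (6*t2)*y + 0*y^2 + 2*y^3 + 0*y^4 + 0*y^5 + 0*y^6)^2) := by
    funext z; ring
  rw [hfun, deriv_polydiv _ _ _ _ _ _ _ _ _ _ _ 2 y (den_canon_ne h)]
  have h0 := den_canon_ne h
  rw [div_eq_div_iff (pow_ne_zero _ (pow_ne_zero _ h0)) (pow_ne_zero _ h)]
  push_cast
  ring

lemma d3q2x_aux (y : ℝ) (h : 3*t3 + 2*y^3 + 6*y*t2 ≠ 0) :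
    deriv (fun y : ℝ => (-108*t2*t3 - 216*y^2*t3 - 72*y^3*t2 + 72*y^5)
        / (3*t3 + 2*y^3 + 6*y*t2)^3) y
      = (1944*t2^2*t3 - 1296*y*t3^2 + 2592*y^2*t2*t3 + 4104*y^4*t3 + 1728*y^5*t2 - 576*y^7)
          / (3*t3 + 2*y^3 + 6*y*t2)^4 := by
  have hfun : (fun y : ℝ => (-108*t2*t3 - 216*y^2*t3 - 72*y^3*t2 + 72*y^5)
        / (3*t3 + 2*y^3 + 6*y*t2)^3)
      = (fun y : ℝ => ((-108*t2*t3) + 0*y + (-216*t3)*y^2 + (-72*t2)*y^3 + 0*y^4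
            + 72*y^5 + 0*y^6)
          / (3*t3 + (6*t2)*y + 0*y^2 + 2*y^3 + 0*y^4 + 0*y^5 + 0*y^6)^3) := by
    funext z; ring
  rw [hfun, deriv_polydiv _ _ _ _ _ _ _ _ _ _ _ 3 y (den_canon_ne h)]
  have h0 := den_canon_ne h
  rw [div_eq_div_iff (pow_ne_zero _ (pow_ne_zero _ h0)) (pow_ne_zero _ h)]
  push_cast
  ring

lemma den_eventually_ne (x : ℝ) (h : 3*t3 + 2*x^3 + 6*x*t2 ≠ 0) :
    ∀ᶠ y in nhds x, 3*t3 + 2*y^3 + 6*y*t2 ≠ 0 := by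
  have hc : ContinuousAt (fun y : ℝ => 3*t3 + 2*y^3 + 6*y*t2) x := by fun_prop
  exact hc.eventually_ne h

lemma d2q1x (y : ℝ) (h : 3*t3 + 2*y^3 + 6*y*t2 ≠ 0) :
    deriv (deriv (fun y => q1sol y t2 t3)) y
      = (54*t3^2 + 216*t2^3 - 108*y*t2*t3 + 216*y^2*t2^2 - 252*y^3*t3 - 72*y^4*t2 + 24*y^6)
          / (3*t3 + 2*y^3 + 6*y*t2)^3 := by
  have he : deriv (fun y => q1sol y t2 t3)
      =ᶠ[nhds y] (fun y : ℝ => (-18*t2^2 + 18*y*t3 - 6*y^4) / (3*t3 + 2*y^3 + 6*y*t2)^2) :=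
    (den_eventually_ne t2 t3 y h).mono fun z hz => dq1x t2 t3 z hz
  rw [he.deriv_eq, d2q1x_aux t2 t3 y h]

lemma d3q1x (y : ℝ) (h : 3*t3 + 2*y^3 + 6*y*t2 ≠ 0) :
    deriv (deriv (deriv (fun y => q1sol y t2 t3))) y
      = (-1296*t2*t3^2 - 3888*t2^4 + 2592*y*t2^2*t3 - 3240*y^2*t3^2 - 5184*y^2*t2^3
          + 864*y^3*t2*t3 - 3456*y^4*t2^2 + 3456*y^5*t3 + 1152*y^6*t2 - 144*y^8)
          / (3*t3 + 2*y^3 + 6*y*t2)^4 := by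
  have he : deriv (deriv (fun y => q1sol y t2 t3))
      =ᶠ[nhds y] (fun y : ℝ => (54*t3^2 + 216*t2^3 - 108*y*t2*t3 + 216*y^2*t2^2
          - 252*y^3*t3 - 72*y^4*t2 + 24*y^6) / (3*t3 + 2*y^3 + 6*y*t2)^3) :=
    (den_eventually_ne t2 t3 y h).mono fun z hz => d2q1x t2 t3 z hz
  rw [he.deriv_eq, d3q1x_aux t2 t3 y h]

lemma d2q2x (y : ℝ) (h : 3*t3 + 2*y^3 + 6*y*t2 ≠ 0) :
    deriv (deriv (fun y => q2sol y t2 t3)) y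
      = (-108*t2*t3 - 216*y^2*t3 - 72*y^3*t2 + 72*y^5) / (3*t3 + 2*y^3 + 6*y*t2)^3 := by
  have he : deriv (fun y => q2sol y t2 t3)
      =ᶠ[nhds y] (fun y : ℝ => (9*t3 - 12*y^3) / (3*t3 + 2*y^3 + 6*y*t2)^2) :=
    (den_eventually_ne t2 t3 y h).mono fun z hz => dq2x t2 t3 z hz
  rw [he.deriv_eq, d2q2x_aux t2 t3 y h]

lemma d3q2x (y : ℝ) (h : 3*t3 + 2*y^3 + 6*y*t2 ≠ 0) :
    deriv (deriv (deriv (fun y => q2sol y t2 t3))) y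
      = (1944*t2^2*t3 - 1296*y*t3^2 + 2592*y^2*t2*t3 + 4104*y^4*t3 + 1728*y^5*t2 - 576*y^7)
          / (3*t3 + 2*y^3 + 6*y*t2)^4 := by
  have he : deriv (deriv (fun y => q2sol y t2 t3))
      =ᶠ[nhds y] (fun y : ℝ => (-108*t2*t3 - 216*y^2*t3 - 72*y^3*t2 + 72*y^5)
          / (3*t3 + 2*y^3 + 6*y*t2)^3) :=
    (den_eventually_ne t2 t3 y h).mono fun z hz => d2q2x t2 t3 z hz
  rw [he.deriv_eq, d3q2x_aux t2 t3 y h]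

end xderivs

section tderivs

lemma dq1t2 (x t2 t3 : ℝ) (h : 3 * t3 + 2 * x ^ 3 + 6 * x * t2 ≠ 0) :
    deriv (fun s => q1sol x s t3) t2
      = (3 * (3 * t3 + 2 * x ^ 3 + 6 * x * t2) - 3 * (t2 + x ^ 2) * (6 * x))
        / (3 * t3 + 2 * x ^ 3 + 6 * x * t2) ^ 2 := by
  have hnum : HasDerivAt (fun s : ℝ => 3 * (s + x ^ 2)) 3 t2 := by
    simpa using ((hasDerivAt_id' (x := t2)).add_const (x ^ 2)).const_mul (3 : ℝ)
  have hden : HasDerivAt (fun s : ℝ => 3 * t3 + 2 * x ^ 3 + 6 * x * s) (6 * x) t2 := by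
    simpa using ((hasDerivAt_id' (x := t2)).const_mul (6 * x)).const_add (3 * t3 + 2 * x ^ 3)
  exact (hnum.div hden h).deriv

lemma dq2t2 (x t2 t3 : ℝ) (h : 3 * t3 + 2 * x ^ 3 + 6 * x * t2 ≠ 0) :
    deriv (fun s => q2sol x s t3) t2
      = (0 * (3 * t3 + 2 * x ^ 3 + 6 * x * t2) - 3 * x * (6 * x))
        / (3 * t3 + 2 * x ^ 3 + 6 * x * t2) ^ 2 := by
  have hnum : HasDerivAt (fun _ : ℝ => 3 * x) 0 t2 := hasDerivAt_const t2 (3 * x)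
  have hden : HasDerivAt (fun s : ℝ => 3 * t3 + 2 * x ^ 3 + 6 * x * s) (6 * x) t2 := by
    simpa using ((hasDerivAt_id' (x := t2)).const_mul (6 * x)).const_add (3 * t3 + 2 * x ^ 3)
  exact (hnum.div hden h).deriv

lemma dq1t3 (x t2 t3 : ℝ) (h : 3 * t3 + 2 * x ^ 3 + 6 * x * t2 ≠ 0) :
    deriv (fun s => q1sol x t2 s) t3
      = (0 * (3 * t3 + 2 * x ^ 3 + 6 * x * t2) - 3 * (t2 + x ^ 2) * 3)
        / (3 * t3 + 2 * x ^ 3 + 6 * x * t2) ^ 2 := by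
  have hnum : HasDerivAt (fun _ : ℝ => 3 * (t2 + x ^ 2)) 0 t3 := hasDerivAt_const t3 _
  have hden : HasDerivAt (fun s : ℝ => 3 * s + 2 * x ^ 3 + 6 * x * t2) 3 t3 := by
    simpa using (((hasDerivAt_id' (x := t3)).const_mul (3 : ℝ)).add_const (2 * x ^ 3)).add_const
      (6 * x * t2)
  exact (hnum.div hden h).deriv

lemma dq2t3 (x t2 t3 : ℝ) (h : 3 * t3 + 2 * x ^ 3 + 6 * x * t2 ≠ 0) :
    deriv (fun s => q2sol x t2 s) t3
      = (0 * (3 * t3 + 2 * x ^ 3 + 6 * x * t2) - 3 * x * 3)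
        / (3 * t3 + 2 * x ^ 3 + 6 * x * t2) ^ 2 := by
  have hnum : HasDerivAt (fun _ : ℝ => 3 * x) 0 t3 := hasDerivAt_const t3 _
  have hden : HasDerivAt (fun s : ℝ => 3 * s + 2 * x ^ 3 + 6 * x * t2) 3 t3 := by
    simpa using (((hasDerivAt_id' (x := t3)).const_mul (3 : ℝ)).add_const (2 * x ^ 3)).add_const
      (6 * x * t2)
  exact (hnum.div hden h).deriv

end tderivs

set_option maxHeartbeats 2000000 in
/-- On the set where `3t₃ + 2x³ + 6xt₂ ≠ 0`, `(q₁,q₂)` is a simultaneous solution of the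
second and third flows of the two-component cKdV hierarchy with `α = 0`. -/
theorem rational_solution_ckdv_alpha0 :
    ∀ x t2 t3 : ℝ, 3 * t3 + 2 * x ^ 3 + 6 * x * t2 ≠ 0 →
      ((deriv (fun s => q1sol x s t3) t2 = deriv (fun y => q2sol y t2 t3) x)
        ∧ (deriv (fun s => q2sol x s t3) t2
            = 2 * q2sol x t2 t3 * deriv (fun y => q1sol y t2 t3) x
              + 4 * q1sol x t2 t3 * deriv (fun y => q2sol y t2 t3) x
              - 6 * q1sol x t2 t3 ^ 2 * deriv (fun y => q1sol y t2 t3) x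
              + (1 / 4) * iteratedDeriv 3 (fun y => q1sol y t2 t3) x))
      ∧ ((deriv (fun s => q1sol x t2 s) t3
            = 3 * q2sol x t2 t3 * deriv (fun y => q1sol y t2 t3) x
              + 3 * q1sol x t2 t3 * deriv (fun y => q2sol y t2 t3) x
              - 6 * q1sol x t2 t3 ^ 2 * deriv (fun y => q1sol y t2 t3) x
              + (1 / 4) * iteratedDeriv 3 (fun y => q1sol y t2 t3) x)
        ∧ (deriv (fun s => q2sol x t2 s) t3
            = 6 * q1sol x t2 t3 * q2sol x t2 t3 * deriv (fun y => q1sol y t2 t3) x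
              - 18 * q1sol x t2 t3 ^ 3 * deriv (fun y => q1sol y t2 t3) x
              + 6 * q1sol x t2 t3 ^ 2 * deriv (fun y => q2sol y t2 t3) x
              + (3 / 4) * q1sol x t2 t3 * iteratedDeriv 3 (fun y => q1sol y t2 t3) x
              + 3 * q2sol x t2 t3 * deriv (fun y => q2sol y t2 t3) x
              + (1 / 4) * iteratedDeriv 3 (fun y => q2sol y t2 t3) x)) := by
  intro x t2 t3 h
  have h' : 3*t3 + 2*x^3 + 6*x*t2 ≠ 0 := by intro hc; apply h; linear_combination hc
  have hi1 : iteratedDeriv 3 (fun y => q1sol y t2 t3) x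
      = deriv (deriv (deriv (fun y => q1sol y t2 t3))) x := by
    rw [show (3:ℕ) = 2+1 from rfl, iteratedDeriv_succ, show (2:ℕ) = 1+1 from rfl,
      iteratedDeriv_succ, iteratedDeriv_one]
  have hi2 : iteratedDeriv 3 (fun y => q2sol y t2 t3) x
      = deriv (deriv (deriv (fun y => q2sol y t2 t3))) x := by
    rw [show (3:ℕ) = 2+1 from rfl, iteratedDeriv_succ, show (2:ℕ) = 1+1 from rfl,
      iteratedDeriv_succ, iteratedDeriv_one]
  rw [hi1, hi2, dq1t2 x t2 t3 h, dq2t2 x t2 t3 h, dq1t3 x t2 t3 h, dq2t3 x t2 t3 h,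
    dq1x t2 t3 x h', dq2x t2 t3 x h', d3q1x t2 t3 x h', d3q2x t2 t3 x h']
  simp only [q1sol, q2sol]
  refine ⟨⟨?_, ?_⟩, ?_, ?_⟩ <;> · field_simp [h']
                                  have hD : 3 * t3 + 2 * x ^ 3 + x * 6 * t2 ≠ 0 := by
                                    intro hc; apply h; linear_combination hc
                                  rw [div_eq_div_iff (pow_ne_zero _ hD) (pow_ne_zero _ hD)]
                                  ring
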